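/- For every integer m ≥ 0, the quantity N(m) = m + log(m!) − m·ψ(m+1), where ψ is the digamma function, is nonnegative, and N(m) = 0 if and only if m = 0. -/
import Mathlib

open Real Finset

/-- The digamma function at the positive integer `m + 1`:
`ψ(m+1) = -γ + Σ_{k=1}^m 1/k`. -/
noncomputable def psiSucc (m : ℕ) : ℝ :=
  -Real.eulerMascheroniConstant + ∑ k ∈ Finset.range m, (1 : ℝ) / (k + 1)

/-- The Wehrl-entropic nonclassicality of the photon number state `|m⟩`:
`N(m) = m + log(m!) − m·ψ(m+1)`. -/
noncomputable def Nfock (m : ℕ) : ℝ :=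
  m + Real.log (Nat.factorial m) - m * psiSucc m

lemma psiSucc_eq (m : ℕ) :
    psiSucc m = -Real.eulerMascheroniConstant + (harmonic m : ℝ) := by
  rw [psiSucc]
  congr 1
  rw [harmonic]
  push_cast
  simp [one_div]

lemma Nfock_succ (m : ℕ) :
    Nfock (m + 1) = Nfock m +
      (Real.eulerMascheroniConstant - Real.eulerMascheroniSeq m) := by
  have hfac : (Nat.factorial (m + 1) : ℝ) = (m + 1) * Nat.factorial m := by
    rw [Nat.factorial_succ]; push_cast; ring
  have hlog : Real.log (Nat.factorial (m + 1)) =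
      Real.log (m + 1) + Real.log (Nat.factorial m) := by
    rw [hfac, Real.log_mul (by positivity) (by exact_mod_cast (Nat.factorial_pos m).ne')]
  have hpsi : psiSucc (m + 1) = psiSucc m + 1 / (m + 1) := by
    rw [psiSucc_eq, psiSucc_eq, harmonic_succ]
    push_cast
    ring
  have hseq : Real.eulerMascheroniSeq m = (harmonic m : ℝ) - Real.log (m + 1) := rfl
  rw [Nfock, Nfock, hlog, hpsi, psiSucc_eq, hseq]
  push_cast
  field_simp
  ring

lemma Nfock_pos (m : ℕ) (hm : m ≠ 0) : 0 < Nfock m := by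
  induction m with
  | zero => exact absurd rfl hm
  | succ n ih =>
    have hstep : 0 < Real.eulerMascheroniConstant - Real.eulerMascheroniSeq n :=
      sub_pos.mpr (Real.eulerMascheroniSeq_lt_eulerMascheroniConstant n)
    rcases Nat.eq_zero_or_pos n with h0 | hpos
    · subst h0
      have h00 : Nfock 0 = 0 := by simp [Nfock, psiSucc]
      rw [Nfock_succ, h00]
      linarith
    · have := ih hpos.ne'
      rw [Nfock_succ]
      linarith

theorem fock_nonclassicality_nonneg (m : ℕ) :
    0 ≤ Nfock m ∧ (Nfock m = 0 ↔ m = 0) := by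
  have h0 : Nfock 0 = 0 := by simp [Nfock, psiSucc]
  rcases Nat.eq_zero_or_pos m with h | h
  · subst h; simp [h0]
  · have hpos := Nfock_pos m h.ne'
    exact ⟨hpos.le, ⟨fun he => absurd he hpos.ne', fun he => absurd he h.ne'⟩⟩
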